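/- Let G be a finite p-group such that (G, Z(G)) is a Camina pair and |Z(G)| ≥ p². Then the quotient Aut_c(G)/Inn(G) is nontrivial, i.e., G admits a class-preserving automorphism that is not inner. -/

import Mathlib

/-- `(G, Z(G))` is a Camina pair: `Z(G)` is a nontrivial proper (normal) subgroup and
`x * Z(G) ⊆ xᴳ` for every `x ∈ G \ Z(G)`. -/
def IsCaminaPairCenter (G : Type*) [Group G] : Prop :=
  Subgroup.center G ≠ ⊥ ∧ Subgroup.center G ≠ ⊤ ∧
    ∀ x : G, x ∉ Subgroup.center G → ∀ z ∈ Subgroup.center G, IsConj x (x * z)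

/-- If `(G, Z(G))` is a Camina pair for a finite `p`-group `G` with `|Z(G)| ≥ p ^ 2`, then
`G` admits a class-preserving automorphism that is not inner. -/
theorem exists_classPreserving_not_inner {p : ℕ} [Fact p.Prime] {G : Type*} [Group G]
    [Finite G] (hp : IsPGroup p G) (hC : IsCaminaPairCenter G)
    (hZ : p ^ 2 ≤ Nat.card (Subgroup.center G)) :
    ∃ α : MulAut G, (∀ x : G, IsConj x (α x)) ∧
      α ∉ (MulAut.conj : G →* MulAut G).range := by
  obtain ⟨hb, htop, hcam⟩ := hC
  have hp2 : 2 ≤ p := (Fact.out : p.Prime).two_le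
  -- G is nontrivial
  have hGnt : Nontrivial G := by
    by_contra h
    rw [not_nontrivial_iff_subsingleton] at h
    exact hb (Subsingleton.elim _ _)
  -- an element outside the center
  obtain ⟨t, htc⟩ : ∃ t : G, t ∉ Subgroup.center G := by
    by_contra h; push_neg at h
    exact htop ((Subgroup.eq_top_iff' _).mpr h)
  -- the center is contained in the commutator subgroup
  have hZC : Subgroup.center G ≤ commutator G := by
    intro w hw
    obtain ⟨u, hu⟩ := isConj_iff.mp (hcam t htc w hw)
    open scoped commutatorElement in
    have hww : w = ⁅t⁻¹, u⁆ := by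
      rw [commutatorElement_def, inv_inv]
      have : t⁻¹ * (u * t * u⁻¹) = w := by rw [hu]; group
      rw [← this]; group
    rw [hww, commutator_def]
    exact Subgroup.commutator_mem_commutator (Subgroup.mem_top _) (Subgroup.mem_top _)
  -- the commutator subgroup is proper
  have hnil : Group.IsNilpotent G := hp.isNilpotent
  have hcomm_ne : commutator G ≠ ⊤ := by
    intro h
    obtain ⟨n, hn⟩ := Subgroup.nilpotent_iff_lowerCentralSeries.mp hnil
    have hall : ∀ m, Subgroup.lowerCentralSeries (⊤ : Subgroup G) m = ⊤ := by
      intro m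
      induction m with
      | zero => exact Subgroup.lowerCentralSeries_zero _
      | succ m ih => rw [Subgroup.lowerCentralSeries_succ, ih]; exact h
    rw [hall n] at hn
    obtain ⟨x, y, hxy⟩ := hGnt.exists_pair_ne
    have hx : x ∈ (⊥ : Subgroup G) := hn ▸ Subgroup.mem_top x
    have hy : y ∈ (⊥ : Subgroup G) := hn ▸ Subgroup.mem_top y
    exact hxy ((Subgroup.mem_bot.mp hx).trans (Subgroup.mem_bot.mp hy).symm)
  haveI hAfin : Finite (Abelianization G) := Quotient.finite _
  have hApg : IsPGroup p (Abelianization G) := hp.to_quotient (commutator G)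
  have hofsurj : Function.Surjective (Abelianization.of (G := G)) :=
    fun b => Quotient.inductionOn b fun x => ⟨x, rfl⟩
  -- a nontrivial element of the abelianization
  obtain ⟨x₁, hx₁⟩ : ∃ x : G, x ∉ commutator G := by
    by_contra h; push_neg at h
    exact hcomm_ne ((Subgroup.eq_top_iff' _).mpr h)
  have hA1 : Abelianization.of x₁ ≠ 1 := fun h => hx₁ ((QuotientGroup.eq_one_iff x₁).mp h)
  -- a maximal subgroup of the abelianization
  haveI : Finite (Subgroup (Abelianization G)) :=
    Finite.of_injective _ SetLike.coe_injective
  obtain ⟨M, hM⟩ : ∃ M : Subgroup (Abelianization G), IsCoatom M := by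
    rcases eq_top_or_exists_le_coatom (⊥ : Subgroup (Abelianization G)) with h | ⟨M, hM, -⟩
    · exfalso
      have hmem : Abelianization.of x₁ ∈ (⊥ : Subgroup (Abelianization G)) :=
        h ▸ Subgroup.mem_top _
      exact hA1 (Subgroup.mem_bot.mp hmem)
    · exact ⟨M, hM⟩
  obtain ⟨a₀, ha₀⟩ : ∃ a : Abelianization G, a ∉ M := by
    by_contra h; push_neg at h
    exact hM.1 ((Subgroup.eq_top_iff' _).mpr h)
  obtain ⟨x₀, hx₀⟩ := hofsurj a₀
  have hx₀M : Abelianization.of x₀ ∉ M := hx₀ ▸ ha₀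
  -- the quotient by the maximal subgroup
  haveI hQfin : Finite (Abelianization G ⧸ M) := Quotient.finite _
  have hQpg : IsPGroup p (Abelianization G ⧸ M) := hApg.to_quotient M
  haveI hQnt : Nontrivial (Abelianization G ⧸ M) :=
    ⟨(a₀ : Abelianization G ⧸ M), 1, fun h => ha₀ ((QuotientGroup.eq_one_iff a₀).mp h)⟩
  have hpQ : p ∣ Nat.card (Abelianization G ⧸ M) := by
    rcases hQpg.card_eq_or_dvd with h | h
    · have := Finite.one_lt_card (α := Abelianization G ⧸ M)
      omega
    · exact h
  obtain ⟨q, hq⟩ := exists_prime_orderOf_dvd_card' p hpQ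
  have hq1 : q ≠ 1 := by
    intro h
    rw [h, orderOf_one] at hq
    exact (Fact.out : p.Prime).ne_one hq.symm
  have hqtop : Subgroup.zpowers q = ⊤ := by
    obtain ⟨b, hb⟩ := QuotientGroup.mk'_surjective M q
    have hlt : M < (Subgroup.zpowers q).comap (QuotientGroup.mk' M) := by
      refine lt_of_le_of_ne ?_ ?_
      · intro m hm
        have h1 : (QuotientGroup.mk' M) m = 1 := (QuotientGroup.eq_one_iff m).mpr hm
        rw [Subgroup.mem_comap, h1]
        exact Subgroup.one_mem _
      · intro hEq
        have hbmem : b ∈ (Subgroup.zpowers q).comap (QuotientGroup.mk' M) := by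
          rw [Subgroup.mem_comap, hb]
          exact Subgroup.mem_zpowers q
        rw [← hEq] at hbmem
        exact hq1 (by rw [← hb]; exact (QuotientGroup.eq_one_iff b).mpr hbmem)
    have htop' := hM.2 _ hlt
    rw [Subgroup.eq_top_iff' _]
    intro x
    obtain ⟨c, hc⟩ := QuotientGroup.mk'_surjective M x
    have hcm : c ∈ (Subgroup.zpowers q).comap (QuotientGroup.mk' M) :=
      htop' ▸ Subgroup.mem_top c
    rw [Subgroup.mem_comap] at hcm
    rwa [hc] at hcm
  have hQcard : Nat.card (Abelianization G ⧸ M) = p := by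
    calc Nat.card (Abelianization G ⧸ M)
        = Nat.card (⊤ : Subgroup (Abelianization G ⧸ M)) := (Subgroup.card_top).symm
      _ = Nat.card (Subgroup.zpowers q) := by rw [hqtop]
      _ = p := by rw [Nat.card_zpowers, hq]
  haveI hQcyc : IsCyclic (Abelianization G ⧸ M) := isCyclic_of_prime_card hQcard
  -- a central element of order p
  have hZpg : IsPGroup p (Subgroup.center G) := hp.to_subgroup _
  have hpZ : p ∣ Nat.card (Subgroup.center G) := by
    rcases hZpg.card_eq_or_dvd with h | h
    · rw [h] at hZ
      have : 2 ^ 2 ≤ p ^ 2 := Nat.pow_le_pow_left hp2 2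
      omega
    · exact h
  obtain ⟨z', hz'⟩ := exists_prime_orderOf_dvd_card' p hpZ
  have hz_mem : (z' : G) ∈ Subgroup.center G := z'.2
  have hzord : orderOf (z' : G) = p := by
    rw [← hz']
    exact orderOf_injective (Subgroup.center G).subtype (Subgroup.subtype_injective _) z'
  haveI hzcyc : IsCyclic (Subgroup.zpowers (z' : G)) := by
    refine ⟨⟨⟨(z' : G), Subgroup.mem_zpowers _⟩, ?_⟩⟩
    rintro ⟨x, m, hm⟩
    exact ⟨m, Subtype.ext (by rw [SubgroupClass.coe_zpow]; exact hm)⟩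
  have hzcard : Nat.card (Subgroup.zpowers (z' : G)) = p := by
    rw [Nat.card_zpowers, hzord]
  let e : (Abelianization G ⧸ M) ≃* Subgroup.zpowers (z' : G) :=
    mulEquivOfCyclicCardEq (by rw [hQcard, hzcard])
  let f : G →* G := ((Subgroup.zpowers (z' : G)).subtype).comp
    (e.toMonoidHom.comp ((QuotientGroup.mk' M).comp Abelianization.of))
  have hfx : ∀ x : G, f x = ((Subgroup.zpowers (z' : G)).subtype)
      (e ((QuotientGroup.mk' M) (Abelianization.of x))) := fun _ => rfl
  have hf_mem : ∀ x : G, f x ∈ Subgroup.zpowers (z' : G) := by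
    intro x; rw [hfx]; exact SetLike.coe_mem _
  have hf_center : ∀ x : G, f x ∈ Subgroup.center G :=
    fun x => Subgroup.zpowers_le.mpr hz_mem (hf_mem x)
  have hf_one : ∀ w ∈ Subgroup.center G, f w = 1 := by
    intro w hw
    have h1 : Abelianization.of w = 1 := (QuotientGroup.eq_one_iff w).mpr (hZC hw)
    rw [hfx, h1, map_one, map_one, map_one]
  have hf_ne : f x₀ ≠ 1 := by
    rw [hfx]
    intro h
    have h1 : e ((QuotientGroup.mk' M) (Abelianization.of x₀)) = 1 :=
      Subgroup.subtype_injective _ (by rw [h, map_one])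
    have h2 : (QuotientGroup.mk' M) (Abelianization.of x₀) = 1 :=
      e.injective (by rw [h1, map_one])
    exact hx₀M ((QuotientGroup.eq_one_iff _).mp h2)
  -- the automorphism x ↦ x * f x
  let β : G →* G :=
    { toFun := fun x => x * f x
      map_one' := by simp
      map_mul' := by
        intro x y
        have hcomm : y * f x = f x * y := Subgroup.mem_center_iff.mp (hf_center x) y
        simp only [map_mul]
        simp only [mul_assoc]
        rw [← mul_assoc y (f x) (f y), hcomm, mul_assoc] }
  have hβx : ∀ x : G, β x = x * f x := fun _ => rfl
  have hβinj : Function.Injective β := by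
    rw [injective_iff_map_eq_one]
    intro x hx
    have hxm : x ∈ Subgroup.center G := by
      have hxe : x = (f x)⁻¹ := eq_inv_of_mul_eq_one_left hx
      rw [hxe]
      exact (Subgroup.center G).inv_mem (hf_center x)
    rw [hβx, hf_one x hxm, mul_one] at hx
    exact hx
  have hβbij := Finite.injective_iff_bijective.mp hβinj
  refine ⟨MulEquiv.ofBijective β hβbij, ?_, ?_⟩
  · intro x
    show IsConj x (β x)
    by_cases hx : x ∈ Subgroup.center G
    · rw [hβx, hf_one x hx, mul_one]
    · exact hcam x hx (f x) (hf_center x)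
  · rintro ⟨g, hg⟩
    have hgx : ∀ x : G, g * x * g⁻¹ = x * f x := by
      intro x
      have h1 := DFunLike.congr_fun hg x
      rw [← hβx]; simpa [MulAut.conj_apply] using h1
    by_cases hgc : g ∈ Subgroup.center G
    · have h1 : g * x₀ * g⁻¹ = x₀ := by
        rw [← Subgroup.mem_center_iff.mp hgc x₀, mul_inv_cancel_right]
      have h2 : x₀ * f x₀ = x₀ := (hgx x₀).symm.trans h1
      exact hf_ne (mul_eq_left.mp h2)
    · have hle : Subgroup.center G ≤ Subgroup.zpowers (z' : G) := by
        intro w hw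
        obtain ⟨u, hu⟩ := isConj_iff.mp (hcam g hgc w hw)
        have hcw : g⁻¹ * w = w * g⁻¹ := Subgroup.mem_center_iff.mp hw g⁻¹
        have key : g * u⁻¹ * g⁻¹ = u⁻¹ * w := by
          have h3 : u * (g * u⁻¹ * g⁻¹) = u * (u⁻¹ * w) := by
            calc u * (g * u⁻¹ * g⁻¹) = (u * g * u⁻¹) * g⁻¹ := by group
              _ = (g * w) * g⁻¹ := by rw [hu]
              _ = g * (g⁻¹ * w) := by rw [mul_assoc, ← hcw]
              _ = u * (u⁻¹ * w) := by group
          exact mul_left_cancel h3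
        have h4 := hgx u⁻¹
        rw [key] at h4
        have hfw : f u⁻¹ = w := (mul_left_cancel h4).symm
        exact hfw ▸ hf_mem u⁻¹
      have hcard : Nat.card (Subgroup.center G) ≤ p := by
        calc Nat.card (Subgroup.center G)
            ≤ Nat.card (Subgroup.zpowers (z' : G)) := Subgroup.card_le_of_le hle
          _ = p := hzcard
      have hlt : p < p ^ 2 := by nlinarith
      omega
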